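/- Let T be a left continuous t-norm and L a right continuous L-operation. Then (L⊗T)(f,g) is a continuous d.d.f. for every non-defective d.d.f. f and every continuous d.d.f. g if and only if T is continuous and L satisfies the cancellation law: L(x,y) = L(x,z) implies x = ∞ or y = z. -/

import Mathlib

open ENNReal Set Filter Topology

/-- A distance distribution function: increasing `f : [0,∞] → [0,1]` with
`f 0 = 0`, `f ∞ = 1`, left continuous on `(0,∞)`. -/
def IsDDF (f : ℝ≥0∞ → ℝ≥0∞) : Prop :=
  Monotone f ∧ (∀ x, f x ≤ 1) ∧ f 0 = 0 ∧ f ⊤ = 1 ∧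
    ∀ x : ℝ≥0∞, 0 < x → x < ⊤ → f x = ⨆ y ∈ Set.Iio x, f y

/-- The largest quasi-inverse `f∨ y = inf {x | f x > y}`. -/
noncomputable def qInv (f : ℝ≥0∞ → ℝ≥0∞) : ℝ≥0∞ → ℝ≥0∞ :=
  fun y => sInf {x | y < f x}

/-- The unit interval `[0,1]` inside `[0,∞]`. -/
def I01 : Set ℝ≥0∞ := Set.Icc 0 1

/-- A left continuous t-norm on `[0,1]`: commutative, associative, increasing in each
place, identity `1`, left continuous in each variable. -/
def IsLeftContTNorm (T : ℝ≥0∞ → ℝ≥0∞ → ℝ≥0∞) : Prop :=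
  (∀ p ∈ I01, ∀ q ∈ I01, T p q ∈ I01) ∧
  (∀ p ∈ I01, ∀ q ∈ I01, T p q = T q p) ∧
  (∀ p ∈ I01, ∀ q ∈ I01, ∀ r ∈ I01, T (T p q) r = T p (T q r)) ∧
  (∀ p ∈ I01, T p 1 = p) ∧
  (∀ q ∈ I01, ∀ p₁ ∈ I01, ∀ p₂ ∈ I01, p₁ ≤ p₂ → T p₁ q ≤ T p₂ q) ∧
  (∀ q ∈ I01, ∀ p ∈ I01, 0 < p → T p q = ⨆ p' ∈ Set.Iio p, T p' q)

/-- A right continuous `L`-operation on `[0,∞]`: commutative, associative, increasing in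
each place, identity `0`, right continuous in each variable. -/
def IsRightContLOp (L : ℝ≥0∞ → ℝ≥0∞ → ℝ≥0∞) : Prop :=
  (∀ x y, L x y = L y x) ∧
  (∀ x y z, L (L x y) z = L x (L y z)) ∧
  (∀ x, L x 0 = x) ∧
  (∀ y x₁ x₂, x₁ ≤ x₂ → L x₁ y ≤ L x₂ y) ∧
  (∀ y x, x < ⊤ → L x y = ⨅ x' ∈ Set.Ioi x, L x' y)

/-- Joint continuity of a t-norm on `[0,1] × [0,1]`. -/
def TNormContinuous (T : ℝ≥0∞ → ℝ≥0∞ → ℝ≥0∞) : Prop :=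
  ContinuousOn (fun pq : ℝ≥0∞ × ℝ≥0∞ => T pq.1 pq.2) (I01 ×ˢ I01)

/-- The tensor-product triangle function:
`(L ⊗ T)(f,g)(x) = sup {T (f r) (g s) | L r s < x}` for `x < ∞`, and `1` at `∞`. -/
noncomputable def tensor (L T : ℝ≥0∞ → ℝ≥0∞ → ℝ≥0∞) (f g : ℝ≥0∞ → ℝ≥0∞) :
    ℝ≥0∞ → ℝ≥0∞ :=
  fun x => if x = ⊤ then 1 else ⨆ r, ⨆ s, ⨆ _ : L r s < x, T (f r) (g s)

/-- A d.d.f. is non-defective if `sup_{x<∞} f x = 1`. -/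
def NonDefective (f : ℝ≥0∞ → ℝ≥0∞) : Prop :=
  (⨆ x ∈ Set.Iio (⊤ : ℝ≥0∞), f x) = 1

/-! ### Basic helpers -/

lemma mem_I01 {a : ℝ≥0∞} (h : a ≤ 1) : a ∈ I01 := ⟨zero_le, h⟩

section Tfacts
variable {T : ℝ≥0∞ → ℝ≥0∞ → ℝ≥0∞}

lemma T_comm (hT : IsLeftContTNorm T) {p q : ℝ≥0∞} (hp : p ≤ 1) (hq : q ≤ 1) :
    T p q = T q p := hT.2.1 p (mem_I01 hp) q (mem_I01 hq)

lemma T_one (hT : IsLeftContTNorm T) {p : ℝ≥0∞} (hp : p ≤ 1) : T p 1 = p :=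
  hT.2.2.2.1 p (mem_I01 hp)

lemma T_one_left (hT : IsLeftContTNorm T) {q : ℝ≥0∞} (hq : q ≤ 1) : T 1 q = q := by
  rw [T_comm hT le_rfl hq, T_one hT hq]

lemma T_mono1 (hT : IsLeftContTNorm T) {q p₁ p₂ : ℝ≥0∞} (hq : q ≤ 1) (hp₁ : p₁ ≤ 1)
    (hp₂ : p₂ ≤ 1) (h : p₁ ≤ p₂) : T p₁ q ≤ T p₂ q :=
  hT.2.2.2.2.1 q (mem_I01 hq) p₁ (mem_I01 hp₁) p₂ (mem_I01 hp₂) h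

lemma T_mono2 (hT : IsLeftContTNorm T) {p q₁ q₂ : ℝ≥0∞} (hp : p ≤ 1) (hq₁ : q₁ ≤ 1)
    (hq₂ : q₂ ≤ 1) (h : q₁ ≤ q₂) : T p q₁ ≤ T p q₂ := by
  rw [T_comm hT hp hq₁, T_comm hT hp hq₂]
  exact T_mono1 hT hp hq₁ hq₂ h

lemma T_le_one (hT : IsLeftContTNorm T) {p q : ℝ≥0∞} (hp : p ≤ 1) (hq : q ≤ 1) :
    T p q ≤ 1 := (hT.1 p (mem_I01 hp) q (mem_I01 hq)).2

lemma T_le_right (hT : IsLeftContTNorm T) {p q : ℝ≥0∞} (hp : p ≤ 1) (hq : q ≤ 1) :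
    T p q ≤ q := by
  calc T p q ≤ T 1 q := T_mono1 hT hq hp le_rfl hp
  _ = q := T_one_left hT hq

lemma T_le_left (hT : IsLeftContTNorm T) {p q : ℝ≥0∞} (hp : p ≤ 1) (hq : q ≤ 1) :
    T p q ≤ p := by
  rw [T_comm hT hp hq]; exact T_le_right hT hq hp

lemma T_zero_left (hT : IsLeftContTNorm T) {q : ℝ≥0∞} (hq : q ≤ 1) : T 0 q = 0 :=
  le_antisymm (T_le_left hT (zero_le) hq) (zero_le)

lemma T_zero_right (hT : IsLeftContTNorm T) {p : ℝ≥0∞} (hp : p ≤ 1) : T p 0 = 0 :=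
  le_antisymm (T_le_right hT hp (zero_le)) (zero_le)

lemma T_sup1 (hT : IsLeftContTNorm T) {p q : ℝ≥0∞} (hp : p ≤ 1) (hq : q ≤ 1)
    (hp0 : 0 < p) : T p q = ⨆ p' ∈ Iio p, T p' q :=
  hT.2.2.2.2.2 q (mem_I01 hq) p (mem_I01 hp) hp0

lemma T_sup2 (hT : IsLeftContTNorm T) {p q : ℝ≥0∞} (hp : p ≤ 1) (hq : q ≤ 1)
    (hq0 : 0 < q) : T p q = ⨆ q' ∈ Iio q, T p q' := by
  rw [T_comm hT hp hq, T_sup1 hT hq hp hq0]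
  refine le_antisymm (iSup₂_le fun q' hq' => le_iSup₂_of_le q' hq' ?_)
    (iSup₂_le fun q' hq' => le_iSup₂_of_le q' hq' ?_)
  · exact le_of_eq (T_comm hT (hq'.le.trans hq) hp)
  · exact le_of_eq (T_comm hT hp (hq'.le.trans hq))

/-- sup-preservation of a T-section over a monotone family (first argument). -/
lemma T_iSup_Iio (hT : IsLeftContTNorm T) {φ : ℝ≥0∞ → ℝ≥0∞} (hφm : Monotone φ)
    (hφ1 : ∀ x, φ x ≤ 1) {a q : ℝ≥0∞} (hq : q ≤ 1)
    (hsup : φ a = ⨆ x ∈ Iio a, φ x) :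
    (⨆ x ∈ Iio a, T (φ x) q) = T (φ a) q := by
  refine le_antisymm (iSup₂_le fun x hx => T_mono1 hT hq (hφ1 x) (hφ1 a) (hφm hx.le)) ?_
  rcases eq_or_lt_of_le (show 0 ≤ φ a from zero_le) with h0 | h0
  · rw [← h0, T_zero_left hT hq]; exact zero_le
  rw [T_sup1 hT (hφ1 a) hq h0]
  refine iSup₂_le fun p' hp' => ?_
  have hp'' : p' < ⨆ x ∈ Iio a, φ x := by rwa [← hsup]
  rw [lt_iSup_iff] at hp''
  obtain ⟨x, hx⟩ := hp''
  rw [lt_iSup_iff] at hx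
  obtain ⟨hxa, hx⟩ := hx
  exact le_iSup₂_of_le x hxa (T_mono1 hT hq (hx.le.trans (hφ1 x)) (hφ1 x) hx.le)

/-- sup-preservation of a T-section over a monotone family (second argument). -/
lemma T_iSup_Iio₂ (hT : IsLeftContTNorm T) {φ : ℝ≥0∞ → ℝ≥0∞} (hφm : Monotone φ)
    (hφ1 : ∀ x, φ x ≤ 1) {a p : ℝ≥0∞} (hp : p ≤ 1)
    (hsup : φ a = ⨆ x ∈ Iio a, φ x) :
    (⨆ x ∈ Iio a, T p (φ x)) = T p (φ a) := by
  rw [T_comm hT hp (hφ1 a), ← T_iSup_Iio hT hφm hφ1 hp hsup]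
  refine le_antisymm (iSup₂_le fun x hx => le_iSup₂_of_le x hx ?_)
    (iSup₂_le fun x hx => le_iSup₂_of_le x hx ?_)
  · exact le_of_eq (T_comm hT hp (hφ1 x))
  · exact le_of_eq (T_comm hT (hφ1 x) hp)

lemma T_contOn_left (hTc : TNormContinuous T) {q : ℝ≥0∞} (hq : q ≤ 1) :
    ContinuousOn (fun p => T p q) I01 := by
  have : ContinuousOn (fun p : ℝ≥0∞ => ((p, q) : ℝ≥0∞ × ℝ≥0∞)) I01 :=
    (continuous_id.prodMk continuous_const).continuousOn
  exact hTc.comp this fun p hp => mk_mem_prod hp (mem_I01 hq)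

lemma T_contOn_right (hTc : TNormContinuous T) {p : ℝ≥0∞} (hp : p ≤ 1) :
    ContinuousOn (fun q => T p q) I01 := by
  have : ContinuousOn (fun q : ℝ≥0∞ => ((p, q) : ℝ≥0∞ × ℝ≥0∞)) I01 :=
    (continuous_const.prodMk continuous_id).continuousOn
  exact hTc.comp this fun q hq => mk_mem_prod (mem_I01 hp) hq

/-- inf-preservation of a T-section over a monotone family, using continuity. -/
lemma T_iInf_Ioi (hT : IsLeftContTNorm T) (hTc : TNormContinuous T)
    {φ : ℝ≥0∞ → ℝ≥0∞} (hφm : Monotone φ) (hφ1 : ∀ x, φ x ≤ 1) {a q : ℝ≥0∞}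
    (ha : a < ⊤) (hq : q ≤ 1) :
    (⨅ x ∈ Ioi a, T (φ x) q) = T (⨅ x ∈ Ioi a, φ x) q := by
  set P := ⨅ x ∈ Ioi a, φ x with hP
  have haa : a + 1 ∈ Ioi a := ENNReal.lt_add_right ha.ne one_ne_zero
  have hP1 : P ≤ 1 := le_trans (iInf₂_le (a + 1) haa) (hφ1 _)
  have hPx : ∀ x ∈ Ioi a, P ≤ φ x := fun x hx => iInf₂_le x hx
  refine le_antisymm ?_ (le_iInf₂ fun x hx => T_mono1 hT hq hP1 (hφ1 x) (hPx x hx))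
  refine ENNReal.le_of_forall_pos_le_add fun ε hε _ => ?_
  have hcw : ContinuousWithinAt (fun p => T p q) I01 P :=
    (T_contOn_left hTc hq) P (mem_I01 hP1)
  have hnb : Iio (T P q + ε) ∈ 𝓝 (T P q) :=
    Iio_mem_nhds (ENNReal.lt_add_right (lt_of_le_of_lt (T_le_one hT hP1 hq) one_lt_top).ne
      (by exact_mod_cast hε.ne'))
  have hpre := hcw hnb
  rw [mem_map, mem_nhdsWithin] at hpre
  obtain ⟨U, hUo, hPU, hUsub⟩ := hpre
  obtain ⟨c, hPc, hIco⟩ := exists_Ico_subset_of_mem_nhds (hUo.mem_nhds hPU)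
    ⟨⊤, lt_of_le_of_lt hP1 one_lt_top⟩
  have : P < c := hPc
  rw [hP, iInf_lt_iff] at this
  obtain ⟨x, hx⟩ := this
  rw [iInf_lt_iff] at hx
  obtain ⟨hxa, hxc⟩ := hx
  have hφxU : φ x ∈ U := hIco ⟨hPx x hxa, hxc⟩
  have : T (φ x) q < T P q + ε := hUsub ⟨hφxU, mem_I01 (hφ1 x)⟩
  exact le_trans (iInf₂_le x hxa) this.le

end Tfacts

/-- A monotone continuous function is a sup of its values on `Iio`. -/
lemma mono_cont_sup {g : ℝ≥0∞ → ℝ≥0∞} (hm : Monotone g) (hc : Continuous g)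
    {a : ℝ≥0∞} (ha : 0 < a) : g a = ⨆ x ∈ Iio a, g x := by
  refine le_antisymm ?_ (iSup₂_le fun x hx => hm hx.le)
  by_contra hcon
  push_neg at hcon
  have hnb : Ioi (⨆ x ∈ Iio a, g x) ∈ 𝓝 (g a) := Ioi_mem_nhds hcon
  have hpre := hc.continuousAt (x := a) hnb
  obtain ⟨l, hla, hIoc⟩ := exists_Ioc_subset_of_mem_nhds hpre ⟨0, ha⟩
  obtain ⟨x, hlx, hxa⟩ := exists_between hla
  have h1 : g x ∈ Ioi (⨆ x ∈ Iio a, g x) := hIoc ⟨hlx, hxa.le⟩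
  have h2 : g x ≤ ⨆ y ∈ Iio a, g y := le_iSup₂_of_le x hxa le_rfl
  exact absurd h2 (not_le.2 h1)

section Lfacts

variable {L : ℝ≥0∞ → ℝ≥0∞ → ℝ≥0∞} (hL : IsRightContLOp L)
include hL

lemma L_comm (x y : ℝ≥0∞) : L x y = L y x := hL.1 x y
lemma L_id (x : ℝ≥0∞) : L x 0 = x := hL.2.2.1 x
lemma L_id' (y : ℝ≥0∞) : L 0 y = y := by rw [L_comm hL, L_id hL]
lemma L_mono1 {x₁ x₂ : ℝ≥0∞} (y : ℝ≥0∞) (h : x₁ ≤ x₂) : L x₁ y ≤ L x₂ y :=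
  hL.2.2.2.1 y x₁ x₂ h
lemma L_mono2 {y₁ y₂ : ℝ≥0∞} (x : ℝ≥0∞) (h : y₁ ≤ y₂) : L x y₁ ≤ L x y₂ := by
  rw [L_comm hL x y₁, L_comm hL x y₂]; exact L_mono1 hL x h
lemma L_rc1 {x : ℝ≥0∞} (y : ℝ≥0∞) (hx : x < ⊤) : L x y = ⨅ x' ∈ Set.Ioi x, L x' y :=
  hL.2.2.2.2 y x hx
lemma L_rc2 {y : ℝ≥0∞} (x : ℝ≥0∞) (hy : y < ⊤) : L x y = ⨅ y' ∈ Set.Ioi y, L x y' := by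
  rw [L_comm hL, L_rc1 hL x hy]
  refine le_antisymm (le_iInf₂ fun y' hy' => iInf₂_le_of_le y' hy' (L_comm hL y' x).le)
    (le_iInf₂ fun y' hy' => iInf₂_le_of_le y' hy' (L_comm hL x y').le)
lemma self_le_L (x y : ℝ≥0∞) : x ≤ L x y := by
  conv_lhs => rw [← L_id hL x]
  exact L_mono2 hL x (zero_le)
lemma self_le_L' (x y : ℝ≥0∞) : y ≤ L x y := by
  rw [L_comm hL]; exact self_le_L hL y x

variable (canc : ∀ x y z : ℝ≥0∞, L x y = L x z → x = ⊤ ∨ y = z)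
include canc

lemma L_strict2 {x y z : ℝ≥0∞} (hx : x < ⊤) (h : y < z) : L x y < L x z := by
  refine lt_of_le_of_ne (L_mono2 hL x h.le) fun heq => ?_
  rcases canc x y z heq with h1 | h1
  · exact absurd h1 hx.ne
  · exact absurd h1 h.ne

lemma L_lt_top {x y : ℝ≥0∞} (hx : x < ⊤) (hy : y < ⊤) : L x y < ⊤ :=
  lt_top_iff_ne_top.2 fun htop => by
    have h2 : L x (y + 1) = ⊤ :=
      top_le_iff.1 (htop ▸ L_mono2 hL x (le_self_add))
    rcases canc x y (y + 1) (htop.trans h2.symm) with h | h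
    · exact hx.ne h
    · exact (ENNReal.lt_add_right hy.ne one_ne_zero).ne h

end Lfacts

/-! ### the explicit continuous strictly monotone d.d.f. -/

noncomputable def gee : ℝ≥0∞ → ℝ≥0∞ := fun s => 1 - (1 + s)⁻¹

lemma gee_cont : Continuous gee :=
  (ENNReal.continuous_sub_left one_ne_top).comp
    (continuous_inv.comp (continuous_add_left 1))

lemma gee_strictMono : StrictMono gee := by
  intro s s' hss
  have h1 : (1 + s') ⁻¹ < (1 + s)⁻¹ := by
    rw [ENNReal.inv_lt_inv]
    exact ENNReal.add_lt_add_left one_ne_top hss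
  have h2 : (1 + s)⁻¹ ≤ 1 := by
    rw [ENNReal.inv_le_one]
    exact le_self_add
  have hc1 : AddLECancellable (1 : ℝ≥0∞) := ENNReal.cancel_of_ne one_ne_top
  have hc2 : AddLECancellable ((1 + s)⁻¹) :=
    ENNReal.cancel_of_ne (ne_top_of_le_ne_top one_ne_top h2)
  exact (hc1.tsub_lt_tsub_iff_left_of_le hc2 h2).2 h1

lemma gee_mono : Monotone gee := gee_strictMono.monotone
lemma gee_le_one (s : ℝ≥0∞) : gee s ≤ 1 := tsub_le_self
lemma gee_zero : gee 0 = 0 := by simp [gee]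
lemma gee_top : gee ⊤ = 1 := by simp [gee]
lemma gee_lt_one {s : ℝ≥0∞} (hs : s < ⊤) : gee s < 1 := by
  have : (0:ℝ≥0∞) < (1 + s)⁻¹ := ENNReal.inv_pos.2 (by simp [hs.ne])
  exact ENNReal.sub_lt_self one_ne_top one_ne_zero this.ne'

lemma gee_isDDF : IsDDF gee :=
  ⟨gee_mono, gee_le_one, gee_zero, gee_top, fun x hx0 _ => mono_cont_sup gee_mono gee_cont hx0⟩

/-- solving `gee s = q` for `q < 1`. -/
lemma gee_surj {q : ℝ≥0∞} (hq : q < 1) :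
    ((1 - q)⁻¹ - 1) < ⊤ ∧ gee ((1 - q)⁻¹ - 1) = q := by
  have hq1 : 0 < 1 - q := tsub_pos_of_lt hq
  have hinvlt : (1 - q)⁻¹ < ⊤ := ENNReal.inv_lt_top.2 hq1
  have h1le : (1:ℝ≥0∞) ≤ (1 - q)⁻¹ := ENNReal.one_le_inv.2 tsub_le_self
  refine ⟨lt_of_le_of_lt tsub_le_self hinvlt, ?_⟩
  have hadd : 1 + ((1 - q)⁻¹ - 1) = (1 - q)⁻¹ := add_tsub_cancel_of_le h1le
  rw [gee, hadd, inv_inv, ENNReal.sub_sub_cancel one_ne_top hq.le]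


/-! ### tensor basics -/

section tensorBasics
variable {T L f g : ℝ≥0∞ → ℝ≥0∞ → ℝ≥0∞} -- dummy, fixed below

end tensorBasics

section tensorLemmas
variable {T L : ℝ≥0∞ → ℝ≥0∞ → ℝ≥0∞} {f g : ℝ≥0∞ → ℝ≥0∞}

lemma tensor_apply {x : ℝ≥0∞} (hx : x ≠ ⊤) :
    tensor L T f g x = ⨆ r, ⨆ s, ⨆ _ : L r s < x, T (f r) (g s) := if_neg hx

lemma tensor_top : tensor L T f g ⊤ = 1 := if_pos rfl

lemma le_tensor {x r s : ℝ≥0∞} (hx : x ≠ ⊤) (h : L r s < x) :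
    T (f r) (g s) ≤ tensor L T f g x := by
  rw [tensor_apply hx]
  exact le_iSup_of_le r (le_iSup_of_le s (le_iSup_of_le h le_rfl))

lemma tensor_le {x c : ℝ≥0∞} (hx : x ≠ ⊤)
    (h : ∀ r s, L r s < x → T (f r) (g s) ≤ c) : tensor L T f g x ≤ c := by
  rw [tensor_apply hx]
  exact iSup_le fun r => iSup_le fun s => iSup_le fun h' => h r s h'

lemma tensor_le_one (hT : IsLeftContTNorm T) (hf1 : ∀ x, f x ≤ 1) (hg1 : ∀ x, g x ≤ 1)
    (x : ℝ≥0∞) : tensor L T f g x ≤ 1 := by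
  by_cases hx : x = ⊤
  · rw [hx, tensor_top]
  · exact tensor_le hx fun r s _ => T_le_one hT (hf1 r) (hg1 s)

lemma tensor_mono (hT : IsLeftContTNorm T) (hf1 : ∀ x, f x ≤ 1) (hg1 : ∀ x, g x ≤ 1) :
    Monotone (tensor L T f g) := by
  intro x y hxy
  by_cases hy : y = ⊤
  · rw [hy, tensor_top]; exact tensor_le_one hT hf1 hg1 x
  · have hx : x ≠ ⊤ := fun h => hy (top_le_iff.1 (h ▸ hxy))
    exact tensor_le hx fun r s hrs => le_tensor hy (lt_of_lt_of_le hrs hxy)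

end tensorLemmas

/-! ### generic continuity helpers -/

lemma contAt_inf_Ioi {k : ℝ≥0∞ → ℝ≥0∞} (hk1 : ∀ x, k x ≤ 1) {x₀ : ℝ≥0∞}
    (hc : ContinuousAt k x₀) (hx₀ : x₀ < ⊤) : (⨅ x ∈ Ioi x₀, k x) ≤ k x₀ := by
  refine ENNReal.le_of_forall_pos_le_add fun ε hε _ => ?_
  have hnb : (𝓝[>] x₀).NeBot := nhdsGT_neBot_of_exists_gt ⟨⊤, hx₀⟩
  have hev : ∀ᶠ x in 𝓝 x₀, k x < k x₀ + ε :=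
    hc (Iio_mem_nhds (ENNReal.lt_add_right (lt_of_le_of_lt (hk1 _) one_lt_top).ne
      (by exact_mod_cast hε.ne')))
  have hev2 : ∀ᶠ x in 𝓝[>] x₀, k x < k x₀ + ↑ε ∧ x ∈ Ioi x₀ :=
    (hev.filter_mono nhdsWithin_le_nhds).and eventually_mem_nhdsWithin
  obtain ⟨x, hx1, hx2⟩ := hev2.exists
  exact le_trans (iInf₂_le x hx2) hx1.le

lemma contAt_le_sup_Iio {k : ℝ≥0∞ → ℝ≥0∞} (hk1 : ∀ x, k x ≤ 1) {x₀ : ℝ≥0∞}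
    (hc : ContinuousAt k x₀) (hx₀ : 0 < x₀) : k x₀ ≤ ⨆ x ∈ Iio x₀, k x := by
  refine ENNReal.le_of_forall_pos_le_add fun ε hε _ => ?_
  by_cases hke : k x₀ ≤ ε
  · exact le_trans hke le_add_self
  push_neg at hke
  have hnb : (𝓝[<] x₀).NeBot := nhdsLT_neBot_of_exists_lt ⟨0, hx₀⟩
  have hlt : k x₀ - ε < k x₀ :=
    ENNReal.sub_lt_self (lt_of_le_of_lt (hk1 _) one_lt_top).ne
      (lt_of_le_of_lt (zero_le) hke).ne' (by exact_mod_cast hε.ne')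
  have hev : ∀ᶠ x in 𝓝 x₀, k x₀ - ε < k x := hc (Ioi_mem_nhds hlt)
  have hev2 : ∀ᶠ x in 𝓝[<] x₀, k x₀ - ↑ε < k x ∧ x ∈ Iio x₀ :=
    (hev.filter_mono nhdsWithin_le_nhds).and eventually_mem_nhdsWithin
  obtain ⟨x, hx1, hx2⟩ := hev2.exists
  have hle : k x₀ - ε ≤ ⨆ x ∈ Iio x₀, k x := le_trans hx1.le (le_iSup₂_of_le x hx2 le_rfl)
  exact tsub_le_iff_right.1 hle

/-! ### right continuity of the tensor (core of sufficiency) -/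

lemma tensor_inf_Ioi_le {T L : ℝ≥0∞ → ℝ≥0∞ → ℝ≥0∞} {f g : ℝ≥0∞ → ℝ≥0∞}
    (hT : IsLeftContTNorm T) (hL : IsRightContLOp L) (hTc : TNormContinuous T)
    (canc : ∀ x y z : ℝ≥0∞, L x y = L x z → x = ⊤ ∨ y = z)
    (hf : IsDDF f) (hg : IsDDF g) (hgc : Continuous g) {x₀ : ℝ≥0∞} (hx₀ : x₀ < ⊤) :
    (⨅ x ∈ Ioi x₀, tensor L T f g x) ≤ tensor L T f g x₀ := by
  obtain ⟨hfm, hf1, hf0, hftop, hflc⟩ := hf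
  obtain ⟨hgm, hg1, hg0, hgtop, -⟩ := hg
  set h := tensor L T f g with hh
  -- reduce to: ∀ t < inf, t ≤ h x₀
  suffices hsuff : ∀ t, t < (⨅ x ∈ Ioi x₀, h x) → t ≤ h x₀ by
    by_contra hcon
    push_neg at hcon
    obtain ⟨t, ht1, ht2⟩ := exists_between hcon
    exact absurd (hsuff t ht2) (not_le.2 ht1)
  intro t ht
  -- extract approximating pairs
  have hseq : ∀ n : ℕ, ∃ r s, L r s < x₀ + ((n : ℝ≥0∞) + 1)⁻¹ ∧ t < T (f r) (g s) := by
    intro n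
    have hne0 : ((n : ℝ≥0∞) + 1)⁻¹ ≠ 0 := by
      simp [ENNReal.inv_ne_zero]
    have hxlt : x₀ < x₀ + ((n : ℝ≥0∞) + 1)⁻¹ := ENNReal.lt_add_right hx₀.ne hne0
    have hxt : x₀ + ((n : ℝ≥0∞) + 1)⁻¹ ≠ ⊤ :=
      ENNReal.add_ne_top.2 ⟨hx₀.ne, ENNReal.inv_ne_top.2 (by simp)⟩
    have h1 : t < h (x₀ + ((n : ℝ≥0∞) + 1)⁻¹) := lt_of_lt_of_le ht (iInf₂_le _ hxlt)
    rw [hh, tensor_apply hxt, lt_iSup_iff] at h1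
    obtain ⟨r, hr⟩ := h1
    rw [lt_iSup_iff] at hr
    obtain ⟨s, hs⟩ := hr
    rw [lt_iSup_iff] at hs
    obtain ⟨hc, hlt⟩ := hs
    exact ⟨r, s, hc, hlt⟩
  choose r s hrs hts using hseq
  obtain ⟨rst, -, φ, hφ, hrφ⟩ := isCompact_univ.tendsto_subseq (x := r) fun n => mem_univ _
  obtain ⟨sst, -, ψ, hψ, hsψ⟩ :=
    isCompact_univ.tendsto_subseq (x := fun n => s (φ n)) fun n => mem_univ _
  set R : ℕ → ℝ≥0∞ := fun n => r (φ (ψ n)) with hR_def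
  set S : ℕ → ℝ≥0∞ := fun n => s (φ (ψ n)) with hS_def
  have hR : Tendsto R atTop (𝓝 rst) := hrφ.comp hψ.tendsto_atTop
  have hS : Tendsto S atTop (𝓝 sst) := hsψ
  have hidle : ∀ n : ℕ, n ≤ φ (ψ n) := fun n => le_trans hψ.le_apply hφ.le_apply
  have hLn : ∀ n, L (R n) (S n) < x₀ + ((n : ℝ≥0∞) + 1)⁻¹ := by
    intro n
    refine lt_of_lt_of_le (hrs (φ (ψ n))) (add_le_add_right ?_ x₀)
    refine ENNReal.inv_le_inv.2 (add_le_add_left ?_ 1)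
    exact_mod_cast hidle n
  have htn : ∀ n, t < T (f (R n)) (g (S n)) := fun n => hts (φ (ψ n))
  have hLx : ∀ ε : ℝ≥0∞, 0 < ε → ∀ᶠ n in atTop, L (R n) (S n) < x₀ + ε := by
    intro ε hε
    obtain ⟨N, hN⟩ := ENNReal.exists_inv_nat_lt hε.ne'
    refine eventually_atTop.2 ⟨N, fun n hn => lt_of_lt_of_le (hLn n) (add_le_add_right ?_ x₀)⟩
    refine le_trans (ENNReal.inv_le_inv.2 ?_) hN.le
    exact le_trans (by exact_mod_cast hn) le_self_add
  have hrst : rst ≤ x₀ := by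
    refine ENNReal.le_of_forall_pos_le_add fun ε hε _ => ?_
    refine le_of_tendsto hR (((hLx ε (by exact_mod_cast hε))).mono fun n hn => ?_)
    exact le_trans (self_le_L hL _ _) hn.le
  have hsst : sst ≤ x₀ := by
    refine ENNReal.le_of_forall_pos_le_add fun ε hε _ => ?_
    refine le_of_tendsto hS (((hLx ε (by exact_mod_cast hε))).mono fun n hn => ?_)
    exact le_trans (self_le_L' hL _ _) hn.le
  have hrt : rst < ⊤ := lt_of_le_of_lt hrst hx₀
  have hx₀ne : x₀ ≠ ⊤ := hx₀.ne
  have sect : ∀ P : ℝ≥0∞, P ≤ 1 →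
      Tendsto (fun n => T P (g (S n))) atTop (𝓝 (T P (g sst))) := by
    intro P hP
    have h1 : Tendsto (fun n => g (S n)) atTop (𝓝[I01] (g sst)) :=
      tendsto_nhdsWithin_of_tendsto_nhds_of_eventually_within _
        ((hgc.tendsto _).comp hS) (Eventually.of_forall fun n => mem_I01 (hg1 _))
    exact ((T_contOn_right hTc hP) (g sst) (mem_I01 (hg1 _))).tendsto.comp h1
  by_cases hs0 : sst = 0
  · have h2 : Tendsto (fun n => g (S n)) atTop (𝓝 0) := by
      have h3 := (hgc.tendsto sst).comp hS
      rwa [hs0, hg0] at h3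
    have h3 : t ≤ 0 := ge_of_tendsto h2 (Eventually.of_forall fun n =>
      (lt_of_lt_of_le (htn n) (T_le_right hT (hf1 _) (hg1 _))).le)
    exact le_trans h3 (zero_le)
  have hs0' : 0 < sst := pos_iff_ne_zero.2 hs0
  have hgsup : g sst = ⨆ x ∈ Iio sst, g x := mono_cont_sup hgm hgc hs0'
  by_cases hcase : ∃ᶠ n in atTop, rst ≤ R n
  · -- approach from the right of rst
    have hA1 : ∀ s' ∈ Iio sst, L rst s' ≤ x₀ := by
      intro s' hs'
      refine ENNReal.le_of_forall_pos_le_add fun ε hε _ => ?_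
      have hev1 : ∀ᶠ n in atTop, S n ∈ Ioi s' := hS (Ioi_mem_nhds hs')
      obtain ⟨n, hn1, hn2, hn3⟩ :=
        (hcase.and_eventually (hev1.and (hLx ε (by exact_mod_cast hε)))).exists
      calc L rst s' ≤ L (R n) (S n) :=
            le_trans (L_mono1 hL s' hn1) (L_mono2 hL (R n) (le_of_lt hn2))
        _ ≤ x₀ + ε := hn3.le
    have hA2 : ∀ u ∈ Ioi rst, t ≤ T (f u) (g sst) := by
      intro u hu
      have hev : ∀ᶠ n in atTop, R n ∈ Iio u := hR (Iio_mem_nhds hu)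
      refine ge_of_tendsto (sect (f u) (hf1 u)) (hev.mono fun n hn => ?_)
      exact le_trans (htn n).le (T_mono1 hT (hg1 _) (hf1 _) (hf1 _) (hfm hn.le))
    set Fst := ⨅ u ∈ Ioi rst, f u with hFst
    have hFst1 : Fst ≤ 1 :=
      le_trans (iInf₂_le (rst + 1) (ENNReal.lt_add_right hrt.ne one_ne_zero)) (hf1 _)
    have hA2' : t ≤ T Fst (g sst) := by
      have h1 : t ≤ ⨅ u ∈ Ioi rst, T (f u) (g sst) := le_iInf₂ fun u hu => hA2 u hu
      rwa [T_iInf_Ioi hT hTc hfm hf1 hrt (hg1 _)] at h1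
    have hA4 : ∀ s' ∈ Iio sst, T Fst (g s') ≤ h x₀ := by
      intro s' hs'
      obtain ⟨s'', hs'1, hs'2⟩ := exists_between (mem_Iio.1 hs')
      have hlt : L rst s' < L rst s'' := L_strict2 hL canc hrt hs'1
      have hlt2 : L rst s' < x₀ := lt_of_lt_of_le hlt (hA1 s'' hs'2)
      rw [L_rc1 hL s' hrt, iInf_lt_iff] at hlt2
      obtain ⟨u, hu⟩ := hlt2
      rw [iInf_lt_iff] at hu
      obtain ⟨hu1, hu2⟩ := hu
      exact le_trans (T_mono1 hT (hg1 _) hFst1 (hf1 _) (iInf₂_le u hu1))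
        (le_tensor hx₀ne hu2)
    have h5 : T Fst (g sst) ≤ h x₀ := by
      rw [← T_iSup_Iio₂ hT hgm hg1 hFst1 hgsup]
      exact iSup₂_le hA4
    exact le_trans hA2' h5
  · -- approach from the left of rst
    have hcase' : ∀ᶠ n in atTop, R n < rst := by
      rw [not_frequently] at hcase
      exact hcase.mono fun n hn => not_le.1 hn
    have hr0 : 0 < rst := by
      obtain ⟨n, hn⟩ := hcase'.exists
      exact lt_of_le_of_lt (zero_le) hn
    have hfsup : f rst = ⨆ x ∈ Iio rst, f x := hflc rst hr0 hrt
    have hB2 : t ≤ T (f rst) (g sst) := by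
      refine ge_of_tendsto (sect (f rst) (hf1 _)) (hcase'.mono fun n hn => ?_)
      exact le_trans (htn n).le (T_mono1 hT (hg1 _) (hf1 _) (hf1 _) (hfm hn.le))
    have hB1 : ∀ r' ∈ Iio rst, ∀ s' ∈ Iio sst, L r' s' ≤ x₀ := by
      intro r' hr' s' hs'
      refine ENNReal.le_of_forall_pos_le_add fun ε hε _ => ?_
      have hev1 : ∀ᶠ n in atTop, R n ∈ Ioi r' := hR (Ioi_mem_nhds hr')
      have hev2 : ∀ᶠ n in atTop, S n ∈ Ioi s' := hS (Ioi_mem_nhds hs')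
      obtain ⟨n, hn1, hn2, hn3⟩ := (hev1.and (hev2.and (hLx ε (by exact_mod_cast hε)))).exists
      calc L r' s' ≤ L (R n) (S n) :=
            le_trans (L_mono1 hL s' hn1.le) (L_mono2 hL (R n) hn2.le)
        _ ≤ x₀ + ε := hn3.le
    have hB4 : ∀ r' ∈ Iio rst, T (f r') (g sst) ≤ h x₀ := by
      intro r' hr'
      have hr't : r' < ⊤ := lt_trans (lt_of_lt_of_le hr' hrst) hx₀
      have hsub : ∀ s' ∈ Iio sst, T (f r') (g s') ≤ h x₀ := by
        intro s' hs'
        obtain ⟨s'', hs'1, hs'2⟩ := exists_between (mem_Iio.1 hs')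
        have hlt : L r' s' < L r' s'' := L_strict2 hL canc hr't hs'1
        have hlt2 : L r' s' < x₀ := lt_of_lt_of_le hlt (hB1 r' hr' s'' hs'2)
        exact le_tensor hx₀ne hlt2
      rw [← T_iSup_Iio₂ hT hgm hg1 (hf1 r') hgsup]
      exact iSup₂_le hsub
    have h5 : T (f rst) (g sst) ≤ h x₀ := by
      rw [← T_iSup_Iio hT hfm hf1 (hg1 _) hfsup]
      exact iSup₂_le hB4
    exact le_trans hB2 h5


/-! ### the tensor is a d.d.f., and the sufficiency direction -/

lemma tensor_isDDF {T L : ℝ≥0∞ → ℝ≥0∞ → ℝ≥0∞} {f g : ℝ≥0∞ → ℝ≥0∞}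
    (hT : IsLeftContTNorm T) (hf1 : ∀ x, f x ≤ 1) (hg1 : ∀ x, g x ≤ 1) :
    IsDDF (tensor L T f g) := by
  refine ⟨tensor_mono hT hf1 hg1, tensor_le_one hT hf1 hg1, ?_, tensor_top, ?_⟩
  · refine le_antisymm (tensor_le (by simp) fun r s hrs => absurd hrs (by simp)) (zero_le)
  · intro x hx0 hxt
    refine le_antisymm (tensor_le hxt.ne fun r s hrs => ?_)
      (iSup₂_le fun y hy => tensor_mono hT hf1 hg1 hy.le)
    obtain ⟨y, hy1, hy2⟩ := exists_between hrs
    exact le_iSup₂_of_le y hy2 (le_tensor (hy2.trans hxt).ne hy1)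

lemma tensor_sup_top {T L : ℝ≥0∞ → ℝ≥0∞ → ℝ≥0∞} {f g : ℝ≥0∞ → ℝ≥0∞}
    (hT : IsLeftContTNorm T) (hL : IsRightContLOp L)
    (canc : ∀ x y z : ℝ≥0∞, L x y = L x z → x = ⊤ ∨ y = z)
    (hfm : Monotone f) (hf1 : ∀ x, f x ≤ 1) (hfn : NonDefective f)
    (hgm : Monotone g) (hg1 : ∀ x, g x ≤ 1) (hgtop : g ⊤ = 1) (hgc : Continuous g) :
    (1 : ℝ≥0∞) ≤ ⨆ x ∈ Iio (⊤ : ℝ≥0∞), tensor L T f g x := by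
  by_contra hcon
  push_neg at hcon
  have h11 : (⨆ p ∈ Iio (1 : ℝ≥0∞), T p 1) = 1 := by
    rw [← T_sup1 hT le_rfl le_rfl one_pos, T_one hT le_rfl]
  rw [← h11, lt_iSup_iff] at hcon
  obtain ⟨p, hp⟩ := hcon
  rw [lt_iSup_iff] at hp
  obtain ⟨hp1, hp2⟩ := hp
  rw [T_sup2 hT hp1.le le_rfl one_pos, lt_iSup_iff] at hp2
  obtain ⟨q, hq⟩ := hp2
  rw [lt_iSup_iff] at hq
  obtain ⟨hq1, hq2⟩ := hq
  have hfr : ∃ rr ∈ Iio (⊤ : ℝ≥0∞), p < f rr := by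
    have : p < ⨆ x ∈ Iio (⊤ : ℝ≥0∞), f x := by rw [hfn]; exact hp1
    rw [lt_iSup_iff] at this
    obtain ⟨rr, hrr⟩ := this
    rw [lt_iSup_iff] at hrr
    exact ⟨rr, hrr.1, hrr.2⟩
  obtain ⟨rr, hrrt, hrrp⟩ := hfr
  have hgs : ∃ ss ∈ Iio (⊤ : ℝ≥0∞), q < g ss := by
    have h1 : q < ⨆ x ∈ Iio (⊤ : ℝ≥0∞), g x := by
      rw [← mono_cont_sup hgm hgc (by norm_num : (0:ℝ≥0∞) < ⊤), hgtop]
      exact hq1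
    rw [lt_iSup_iff] at h1
    obtain ⟨ss, hss⟩ := h1
    rw [lt_iSup_iff] at hss
    exact ⟨ss, hss.1, hss.2⟩
  obtain ⟨ss, hsst, hssq⟩ := hgs
  have hLrs : L rr ss < ⊤ := L_lt_top hL canc hrrt hsst
  have hxne : L rr ss + 1 ≠ ⊤ := ENNReal.add_ne_top.2 ⟨hLrs.ne, one_ne_top⟩
  have h2 : T p q ≤ tensor L T f g (L rr ss + 1) := by
    refine le_trans ?_ (le_tensor hxne (ENNReal.lt_add_right hLrs.ne one_ne_zero))
    exact le_trans (T_mono1 hT hq1.le hp1.le (hf1 rr) hrrp.le)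
      (T_mono2 hT (hf1 rr) hq1.le (hg1 ss) hssq.le)
  have h3 : tensor L T f g (L rr ss + 1) ≤ ⨆ x ∈ Iio (⊤ : ℝ≥0∞), tensor L T f g x :=
    le_iSup₂_of_le _ (lt_top_iff_ne_top.2 hxne) le_rfl
  exact absurd (lt_of_lt_of_le hq2 (le_trans h2 h3)) (lt_irrefl _)

lemma tensor_continuous {T L : ℝ≥0∞ → ℝ≥0∞ → ℝ≥0∞} {f g : ℝ≥0∞ → ℝ≥0∞}
    (hT : IsLeftContTNorm T) (hL : IsRightContLOp L) (hTc : TNormContinuous T)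
    (canc : ∀ x y z : ℝ≥0∞, L x y = L x z → x = ⊤ ∨ y = z)
    (hf : IsDDF f) (hfn : NonDefective f) (hg : IsDDF g) (hgc : Continuous g) :
    Continuous (tensor L T f g) := by
  set h := tensor L T f g with hh
  have hddf : IsDDF h := tensor_isDDF hT hf.2.1 hg.2.1
  obtain ⟨hm, h1, h0, htp, hlc⟩ := hddf
  rw [continuous_iff_continuousAt]
  intro x₀
  have hne : h x₀ ≠ ⊤ := (lt_of_le_of_lt (h1 x₀) one_lt_top).ne
  rw [ContinuousAt, ENNReal.tendsto_nhds hne]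
  intro ε hε
  have hupper : ∀ᶠ x in 𝓝 x₀, h x ≤ h x₀ + ε := by
    by_cases hxt : x₀ = ⊤
    · refine Eventually.of_forall fun x => ?_
      rw [hxt, htp]
      exact le_trans (h1 x) le_self_add
    · have hinf := tensor_inf_Ioi_le hT hL hTc canc hf hg hgc (lt_top_iff_ne_top.2 hxt)
      have hlt : (⨅ x ∈ Ioi x₀, h x) < h x₀ + ε :=
        lt_of_le_of_lt hinf (ENNReal.lt_add_right hne hε.ne')
      rw [iInf_lt_iff] at hlt
      obtain ⟨x₁, hx₁⟩ := hlt
      rw [iInf_lt_iff] at hx₁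
      obtain ⟨hx₁1, hx₁2⟩ := hx₁
      filter_upwards [Iio_mem_nhds hx₁1] with x hx
      exact le_trans (hm hx.le) hx₁2.le
  have hlower : ∀ᶠ x in 𝓝 x₀, h x₀ - ε ≤ h x := by
    by_cases hx0 : x₀ = 0
    · refine Eventually.of_forall fun x => ?_
      rw [hx0, h0]
      simp
    have hx0' : 0 < x₀ := pos_iff_ne_zero.2 hx0
    by_cases hke : h x₀ ≤ ε
    · refine Eventually.of_forall fun x => ?_
      rw [tsub_eq_zero_of_le hke]
      exact zero_le
    push_neg at hke
    have hsup : h x₀ = ⨆ y ∈ Iio x₀, h y := by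
      by_cases hxt : x₀ = ⊤
      · rw [hxt, htp]
        refine le_antisymm ?_ (iSup₂_le fun y _ => h1 y)
        exact tensor_sup_top hT hL canc hf.1 hf.2.1 hfn hg.1 hg.2.1 hg.2.2.2.1 hgc
      · exact hlc x₀ hx0' (lt_top_iff_ne_top.2 hxt)
    have hlt : h x₀ - ε < ⨆ y ∈ Iio x₀, h y := by
      rw [← hsup]
      exact ENNReal.sub_lt_self hne (lt_of_le_of_lt (zero_le) hke).ne' hε.ne'
    rw [lt_iSup_iff] at hlt
    obtain ⟨y, hy⟩ := hlt
    rw [lt_iSup_iff] at hy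
    obtain ⟨hy1, hy2⟩ := hy
    filter_upwards [Ioi_mem_nhds hy1] with x hx
    exact le_trans hy2.le (hm hx.le)
  exact (hupper.and hlower).mono fun x hx => ⟨hx.2, hx.1⟩

/-! ### necessity: step functions -/

lemma step_mono {a : ℝ≥0∞} : Monotone (fun r => if r ≤ a then (0:ℝ≥0∞) else 1) := by
  intro u v huv
  dsimp only
  by_cases hu : u ≤ a
  · simp [hu]
  · have hv : ¬ v ≤ a := fun hv => hu (huv.trans hv)
    simp [hu, hv]

lemma step_le_one {a : ℝ≥0∞} (r : ℝ≥0∞) : (if r ≤ a then (0:ℝ≥0∞) else 1) ≤ 1 := by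
  split_ifs <;> simp

lemma step_isDDF {a : ℝ≥0∞} (hat : a < ⊤) :
    IsDDF (fun r => if r ≤ a then (0:ℝ≥0∞) else 1) := by
  refine ⟨step_mono, step_le_one, if_pos zero_le, if_neg (not_le.2 hat), ?_⟩
  intro x hx0 hxt
  by_cases hxa : x ≤ a
  · show (if x ≤ a then (0:ℝ≥0∞) else 1) = _
    rw [if_pos hxa]
    refine (le_antisymm (iSup₂_le fun y hy => ?_) (zero_le)).symm
    show (if y ≤ a then (0:ℝ≥0∞) else 1) ≤ 0
    rw [if_pos ((le_of_lt hy).trans hxa)]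
  · push_neg at hxa
    show (if x ≤ a then (0:ℝ≥0∞) else 1) = _
    rw [if_neg (not_le.2 hxa)]
    obtain ⟨w, hw1, hw2⟩ := exists_between hxa
    refine le_antisymm ?_ (iSup₂_le fun y _ => step_le_one y)
    refine le_iSup₂_of_le w hw2 ?_
    show (1:ℝ≥0∞) ≤ if w ≤ a then (0:ℝ≥0∞) else 1
    rw [if_neg (not_le.2 hw1)]

lemma step_nonDef {a : ℝ≥0∞} (hat : a < ⊤) :
    NonDefective (fun r => if r ≤ a then (0:ℝ≥0∞) else 1) := by
  refine le_antisymm (iSup₂_le fun y _ => step_le_one y) ?_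
  have h1 : a < a + 1 := ENNReal.lt_add_right hat.ne one_ne_zero
  have h2 : a + 1 < ⊤ := ENNReal.add_lt_top.2 ⟨hat, one_lt_top⟩
  refine le_iSup₂_of_le (a + 1) h2 ?_
  show (1:ℝ≥0∞) ≤ if a + 1 ≤ a then (0:ℝ≥0∞) else 1
  rw [if_neg (not_le.2 h1)]

lemma forward_aux {T L : ℝ≥0∞ → ℝ≥0∞ → ℝ≥0∞}
    (hT : IsLeftContTNorm T) (hL : IsRightContLOp L)
    (hLHS : ∀ f g : ℝ≥0∞ → ℝ≥0∞, IsDDF f → NonDefective f → IsDDF g → Continuous g →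
      IsDDF (tensor L T f g) ∧ Continuous (tensor L T f g))
    {a y z : ℝ≥0∞} (ha : a ≠ ⊤) (hyz : y < z) (heq : L a y = L a z) : False := by
  by_cases ha0 : a = 0
  · rw [ha0, L_id' hL, L_id' hL] at heq
    exact absurd heq hyz.ne
  have hat : a < ⊤ := lt_top_iff_ne_top.2 ha
  have hyt : y < ⊤ := lt_of_lt_of_le hyz le_top
  set z' := min z (y + 1) with hz'
  have hyz' : y < z' := lt_min hyz (ENNReal.lt_add_right hyt.ne one_ne_zero)
  have hz't : z' < ⊤ := lt_of_le_of_lt (min_le_right _ _) (ENNReal.add_lt_top.2 ⟨hyt, one_lt_top⟩)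
  have heq' : L a z' = L a y :=
    le_antisymm (heq ▸ L_mono2 hL a (min_le_left _ _)) (L_mono2 hL a hyz'.le)
  set f : ℝ≥0∞ → ℝ≥0∞ := fun r => if r ≤ a then 0 else 1 with hf
  obtain ⟨-, hcont⟩ := hLHS f gee (step_isDDF hat) (step_nonDef hat) gee_isDDF gee_cont
  set h := tensor L T f gee with hh
  have hub : ∀ w, w ≠ ⊤ → w ≤ L a y → h w ≤ gee y := by
    intro w hw hwle
    refine tensor_le hw fun r s hrs => ?_
    by_cases hra : r ≤ a
    · rw [hf]
      dsimp only
      rw [if_pos hra, T_zero_left hT (gee_le_one s)]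
      exact zero_le
    · rw [hf]
      dsimp only
      rw [if_neg hra, T_one_left hT (gee_le_one s)]
      push_neg at hra
      have h2 : L a s < L a y := lt_of_le_of_lt (L_mono1 hL s hra.le) (lt_of_lt_of_le hrs hwle)
      have hsy : s ≤ y := by
        by_contra hc
        push_neg at hc
        exact absurd (L_mono2 hL a hc.le) (not_le.2 h2)
      exact gee_mono hsy
  by_cases hx₀ : L a y = ⊤
  · have hsup : h ⊤ ≤ ⨆ x ∈ Iio (⊤ : ℝ≥0∞), h x :=
      contAt_le_sup_Iio (tensor_le_one hT step_le_one gee_le_one) hcont.continuousAt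
        (by norm_num)
    have h2 : (1:ℝ≥0∞) ≤ gee y := by
      have h3 : (⨆ x ∈ Iio (⊤ : ℝ≥0∞), h x) ≤ gee y :=
        iSup₂_le fun x hx => hub x (mem_Iio.1 hx).ne (hx₀ ▸ le_top)
      calc (1:ℝ≥0∞) = h ⊤ := tensor_top.symm
        _ ≤ _ := le_trans hsup h3
    exact absurd h2 (not_le.2 (gee_lt_one hyt))
  · have hx₀t : L a y < ⊤ := lt_top_iff_ne_top.2 hx₀
    have hlb : ∀ x ∈ Ioi (L a y), gee z' ≤ h x := by
      intro x hx
      by_cases hxt : x = ⊤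
      · rw [hxt]
        exact le_trans (gee_le_one z') tensor_top.ge
      · have h2 : L a z' < x := by rw [heq']; exact hx
        rw [L_rc1 hL z' hat, iInf_lt_iff] at h2
        obtain ⟨u, hu⟩ := h2
        rw [iInf_lt_iff] at hu
        obtain ⟨hu1, hu2⟩ := hu
        have h3 := le_tensor (f := f) (g := gee) (T := T) hxt hu2
        have h4 : f u = 1 := by
          rw [hf]
          show (if u ≤ a then (0:ℝ≥0∞) else 1) = 1
          rw [if_neg (not_le.2 hu1)]
        rwa [h4, T_one_left hT (gee_le_one _)] at h3
    have hinf : (⨅ x ∈ Ioi (L a y), h x) ≤ h (L a y) :=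
      contAt_inf_Ioi (tensor_le_one hT step_le_one gee_le_one) hcont.continuousAt hx₀t
    have h4 : gee z' ≤ gee y :=
      le_trans (le_iInf₂ hlb) (le_trans hinf (hub _ hx₀ le_rfl))
    exact absurd h4 (not_le.2 (gee_strictMono hyz'))

lemma forward_canc {T L : ℝ≥0∞ → ℝ≥0∞ → ℝ≥0∞}
    (hT : IsLeftContTNorm T) (hL : IsRightContLOp L)
    (hLHS : ∀ f g : ℝ≥0∞ → ℝ≥0∞, IsDDF f → NonDefective f → IsDDF g → Continuous g →
      IsDDF (tensor L T f g) ∧ Continuous (tensor L T f g)) :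
    ∀ x y z : ℝ≥0∞, L x y = L x z → x = ⊤ ∨ y = z := by
  intro x y z heq
  by_contra hcon
  push_neg at hcon
  obtain ⟨hx, hyz⟩ := hcon
  rcases Ne.lt_or_gt hyz with h | h
  · exact forward_aux hT hL hLHS hx h heq
  · exact forward_aux hT hL hLHS hx h heq.symm

/-! ### necessity: right continuity of T -/

lemma step3_mono {p M : ℝ≥0∞} (hp : p ≤ 1) :
    Monotone (fun r => if r ≤ 1 then (0:ℝ≥0∞) else if r ≤ M then p else 1) := by
  intro u v huv
  dsimp only
  by_cases hu1 : u ≤ 1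
  · rw [if_pos hu1]; exact zero_le
  · have hv1 : ¬ v ≤ 1 := fun h => hu1 (huv.trans h)
    rw [if_neg hu1, if_neg hv1]
    by_cases huM : u ≤ M
    · rw [if_pos huM]
      by_cases hvM : v ≤ M
      · rw [if_pos hvM]
      · rw [if_neg hvM]; exact hp
    · have hvM : ¬ v ≤ M := fun h => huM (huv.trans h)
      rw [if_neg huM, if_neg hvM]

lemma step3_le_one {p M : ℝ≥0∞} (hp : p ≤ 1) (r : ℝ≥0∞) :
    (if r ≤ 1 then (0:ℝ≥0∞) else if r ≤ M then p else 1) ≤ 1 := by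
  split_ifs <;> simp [hp]

lemma step3_isDDF {p M : ℝ≥0∞} (hp : p ≤ 1) (h1M : 1 < M) (hMt : M < ⊤) :
    IsDDF (fun r => if r ≤ 1 then (0:ℝ≥0∞) else if r ≤ M then p else 1) := by
  refine ⟨step3_mono hp, step3_le_one hp, ?_, ?_, ?_⟩
  · show (if (0:ℝ≥0∞) ≤ 1 then (0:ℝ≥0∞) else if (0:ℝ≥0∞) ≤ M then p else 1) = 0
    rw [if_pos zero_le_one]
  · show (if (⊤:ℝ≥0∞) ≤ 1 then (0:ℝ≥0∞) else if (⊤:ℝ≥0∞) ≤ M then p else 1) = 1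
    rw [if_neg (not_le.2 one_lt_top), if_neg (not_le.2 hMt)]
  · intro x hx0 hxt
    show (if x ≤ 1 then (0:ℝ≥0∞) else if x ≤ M then p else 1) = _
    by_cases hx1 : x ≤ 1
    · rw [if_pos hx1]
      refine (le_antisymm (iSup₂_le fun y hy => ?_) (zero_le)).symm
      show (if y ≤ 1 then (0:ℝ≥0∞) else if y ≤ M then p else 1) ≤ 0
      rw [if_pos ((le_of_lt hy).trans hx1)]
    · push_neg at hx1
      rw [if_neg (not_le.2 hx1)]
      by_cases hxM : x ≤ M
      · rw [if_pos hxM]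
        obtain ⟨w, hw1, hw2⟩ := exists_between hx1
        refine le_antisymm ?_ (iSup₂_le fun y hy => ?_)
        · refine le_iSup₂_of_le w hw2 ?_
          show p ≤ if w ≤ 1 then (0:ℝ≥0∞) else if w ≤ M then p else 1
          rw [if_neg (not_le.2 hw1), if_pos ((le_of_lt hw2).trans hxM)]
        · show (if y ≤ 1 then (0:ℝ≥0∞) else if y ≤ M then p else 1) ≤ p
          by_cases hy1 : y ≤ 1
          · rw [if_pos hy1]; exact zero_le
          · rw [if_neg hy1, if_pos ((le_of_lt hy).trans hxM)]
      · push_neg at hxM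
        rw [if_neg (not_le.2 hxM)]
        obtain ⟨w, hw1, hw2⟩ := exists_between hxM
        refine le_antisymm ?_ (iSup₂_le fun y _ => step3_le_one hp y)
        refine le_iSup₂_of_le w hw2 ?_
        show (1:ℝ≥0∞) ≤ if w ≤ 1 then (0:ℝ≥0∞) else if w ≤ M then p else 1
        rw [if_neg (not_le.2 (lt_trans h1M hw1)), if_neg (not_le.2 hw1)]

lemma step3_nonDef {p M : ℝ≥0∞} (hp : p ≤ 1) (h1M : 1 < M) (hMt : M < ⊤) :
    NonDefective (fun r => if r ≤ 1 then (0:ℝ≥0∞) else if r ≤ M then p else 1) := by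
  refine le_antisymm (iSup₂_le fun y _ => step3_le_one hp y) ?_
  have h1 : M < M + 1 := ENNReal.lt_add_right hMt.ne one_ne_zero
  have h2 : M + 1 < ⊤ := ENNReal.add_lt_top.2 ⟨hMt, one_lt_top⟩
  refine le_iSup₂_of_le (M + 1) h2 ?_
  show (1:ℝ≥0∞) ≤ if M + 1 ≤ 1 then (0:ℝ≥0∞) else if M + 1 ≤ M then p else 1
  rw [if_neg (not_le.2 (lt_trans h1M h1)), if_neg (not_le.2 h1)]

lemma forward_rcT {T L : ℝ≥0∞ → ℝ≥0∞ → ℝ≥0∞}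
    (hT : IsLeftContTNorm T) (hL : IsRightContLOp L)
    (hLHS : ∀ f g : ℝ≥0∞ → ℝ≥0∞, IsDDF f → NonDefective f → IsDDF g → Continuous g →
      IsDDF (tensor L T f g) ∧ Continuous (tensor L T f g))
    (canc : ∀ x y z : ℝ≥0∞, L x y = L x z → x = ⊤ ∨ y = z)
    {p q : ℝ≥0∞} (hp : p ≤ 1) (hq : q < 1) :
    (⨅ q₂ ∈ Ioc q 1, T p q₂) ≤ T p q := by
  obtain ⟨hsqt, hsq⟩ := gee_surj hq
  set sq := (1 - q)⁻¹ - 1 with hsqdef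
  set x₀ := L 1 sq with hx₀def
  have hx₀t : x₀ < ⊤ := L_lt_top hL canc one_lt_top hsqt
  set M := x₀ + 1 with hMdef
  have h1x₀ : 1 ≤ x₀ := self_le_L hL 1 sq
  have h1M : 1 < M := lt_of_le_of_lt h1x₀ (ENNReal.lt_add_right hx₀t.ne one_ne_zero)
  have hMt : M < ⊤ := ENNReal.add_lt_top.2 ⟨hx₀t, one_lt_top⟩
  set f : ℝ≥0∞ → ℝ≥0∞ := fun r => if r ≤ 1 then 0 else if r ≤ M then p else 1 with hfdef
  obtain ⟨-, hcont⟩ := hLHS f gee (step3_isDDF hp h1M hMt) (step3_nonDef hp h1M hMt)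
    gee_isDDF gee_cont
  set h := tensor L T f gee with hh
  have hub : h x₀ ≤ T p q := by
    refine tensor_le hx₀t.ne fun r s hrs => ?_
    by_cases hr1 : r ≤ 1
    · have hfr : f r = 0 := by
        rw [hfdef]
        show (if r ≤ 1 then (0:ℝ≥0∞) else if r ≤ M then p else 1) = 0
        rw [if_pos hr1]
      rw [hfr, T_zero_left hT (gee_le_one s)]
      exact zero_le
    · push_neg at hr1
      by_cases hrM : r ≤ M
      · have hfr : f r = p := by
          rw [hfdef]
          show (if r ≤ 1 then (0:ℝ≥0∞) else if r ≤ M then p else 1) = p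
          rw [if_neg (not_le.2 hr1), if_pos hrM]
        rw [hfr]
        have hLs : L 1 s < x₀ := lt_of_le_of_lt (L_mono1 hL s hr1.le) hrs
        have hssq : s ≤ sq := by
          by_contra hc
          push_neg at hc
          exact absurd (L_mono2 hL 1 hc.le) (not_le.2 hLs)
        have hgs : gee s ≤ q := hsq ▸ gee_mono hssq
        exact T_mono2 hT hp (gee_le_one s) hq.le hgs
      · push_neg at hrM
        have : r ≤ L r s := self_le_L hL r s
        have hcontra : x₀ < x₀ := lt_trans (lt_of_lt_of_le
          (lt_trans (ENNReal.lt_add_right hx₀t.ne one_ne_zero) hrM) this) hrs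
        exact absurd hcontra (lt_irrefl _)
  have hlb : ∀ x ∈ Ioi x₀, (⨅ q₂ ∈ Ioc q 1, T p q₂) ≤ h x := by
    intro x hx
    by_cases hxt : x = ⊤
    · rw [hxt]
      have h1 : (⨅ q₂ ∈ Ioc q 1, T p q₂) ≤ p := by
        refine le_trans (iInf₂_le 1 ⟨hq, le_rfl⟩) (T_one hT hp).le
      rw [hh, tensor_top]
      exact le_trans h1 hp
    · have h2 : (⨅ s' ∈ Ioi sq, L 1 s') < x := by
        rw [← L_rc2 hL 1 hsqt]
        exact hx
      rw [iInf_lt_iff] at h2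
      obtain ⟨s', hs'⟩ := h2
      rw [iInf_lt_iff] at hs'
      obtain ⟨hs'1, hs'2⟩ := hs'
      have h4 : (⨅ u ∈ Ioi 1, L u s') < x := by
        rw [← L_rc1 hL s' one_lt_top]
        exact hs'2
      rw [iInf_lt_iff] at h4
      obtain ⟨u, hu⟩ := h4
      rw [iInf_lt_iff] at hu
      obtain ⟨hu1, hu2⟩ := hu
      have h1u' : 1 < min u M := lt_min hu1 h1M
      have hLu' : L (min u M) s' < x := lt_of_le_of_lt (L_mono1 hL s' (min_le_left u M)) hu2
      have hfu' : f (min u M) = p := by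
        rw [hfdef]
        show (if min u M ≤ 1 then (0:ℝ≥0∞) else if min u M ≤ M then p else 1) = p
        rw [if_neg (not_le.2 h1u'), if_pos (min_le_right u M)]
      have h5 := le_tensor (f := f) (g := gee) (T := T) hxt hLu'
      rw [hfu'] at h5
      have hgs' : q < gee s' := hsq ▸ gee_strictMono hs'1
      exact le_trans (iInf₂_le (gee s') ⟨hgs', gee_le_one s'⟩) h5
  have hinf := contAt_inf_Ioi (tensor_le_one hT (step3_le_one hp) gee_le_one)
    hcont.continuousAt hx₀t
  exact le_trans (le_iInf₂ hlb) (le_trans hinf hub)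

/-! ### from one-sided continuity to joint continuity of T -/

section Tcont
variable {T : ℝ≥0∞ → ℝ≥0∞ → ℝ≥0∞}

/-- upper selection in the second argument -/
lemma T_upper_sel₂ (hT : IsLeftContTNorm T)
    (rc : ∀ p, p ≤ 1 → ∀ q, q < 1 → (⨅ q₂ ∈ Ioc q 1, T p q₂) ≤ T p q)
    {p q : ℝ≥0∞} (hp : p ≤ 1) (hq : q ≤ 1) {ε : ℝ≥0∞} (hε : 0 < ε) :
    ∃ q₂, q ≤ q₂ ∧ q₂ ≤ 1 ∧ (q < 1 → q < q₂) ∧ T p q₂ ≤ T p q + ε := by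
  by_cases hq1 : q < 1
  · have hne : T p q ≠ ⊤ := (lt_of_le_of_lt (T_le_one hT hp hq) one_lt_top).ne
    have h1 : (⨅ q₂ ∈ Ioc q 1, T p q₂) < T p q + ε :=
      lt_of_le_of_lt (rc p hp q hq1) (ENNReal.lt_add_right hne hε.ne')
    rw [iInf_lt_iff] at h1
    obtain ⟨q₂, h2⟩ := h1
    rw [iInf_lt_iff] at h2
    obtain ⟨hmem, hlt⟩ := h2
    exact ⟨q₂, hmem.1.le, hmem.2, fun _ => hmem.1, hlt.le⟩
  · exact ⟨q, le_rfl, hq, fun h => absurd h hq1, le_self_add⟩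

/-- upper selection in the first argument -/
lemma T_upper_sel₁ (hT : IsLeftContTNorm T)
    (rc : ∀ p, p ≤ 1 → ∀ q, q < 1 → (⨅ q₂ ∈ Ioc q 1, T p q₂) ≤ T p q)
    {p q : ℝ≥0∞} (hp : p ≤ 1) (hq : q ≤ 1) {ε : ℝ≥0∞} (hε : 0 < ε) :
    ∃ p₂, p ≤ p₂ ∧ p₂ ≤ 1 ∧ (p < 1 → p < p₂) ∧ T p₂ q ≤ T p q + ε := by
  obtain ⟨p₂, h1, h2, h3, h4⟩ := T_upper_sel₂ hT rc hq hp hε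
  refine ⟨p₂, h1, h2, h3, ?_⟩
  rw [T_comm hT h2 hq, T_comm hT hp hq]
  exact h4

/-- lower selection in the second argument -/
lemma T_lower_sel₂ (hT : IsLeftContTNorm T)
    {p q : ℝ≥0∞} (hp : p ≤ 1) (hq : q ≤ 1) {ε : ℝ≥0∞} (hε : 0 < ε) :
    ∃ q₁, q₁ ≤ q ∧ q₁ ≤ 1 ∧ (0 < q → q₁ < q) ∧ T p q - ε ≤ T p q₁ := by
  by_cases hq0 : 0 < q
  · by_cases hle : T p q ≤ ε
    · exact ⟨0, zero_le, zero_le, fun _ => hq0, by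
        rw [tsub_eq_zero_of_le hle]; exact zero_le⟩
    · push_neg at hle
      have hne : T p q ≠ ⊤ := (lt_of_le_of_lt (T_le_one hT hp hq) one_lt_top).ne
      have h1 : T p q - ε < T p q :=
        ENNReal.sub_lt_self hne (lt_of_le_of_lt (zero_le) hle).ne' hε.ne'
      rw [T_sup2 hT hp hq hq0, lt_iSup_iff] at h1
      obtain ⟨q₁, h2⟩ := h1
      rw [lt_iSup_iff] at h2
      obtain ⟨hmem, hlt⟩ := h2
      have : T p q - ε ≤ T p q₁ := by
        rw [T_sup2 hT hp hq hq0]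
        exact hlt.le
      exact ⟨q₁, hmem.le, hmem.le.trans hq, fun _ => hmem, this⟩
  · push_neg at hq0
    exact ⟨q, le_rfl, hq, fun h => absurd h (not_lt.2 hq0), tsub_le_self.trans le_rfl⟩

/-- lower selection in the first argument -/
lemma T_lower_sel₁ (hT : IsLeftContTNorm T)
    {p q : ℝ≥0∞} (hp : p ≤ 1) (hq : q ≤ 1) {ε : ℝ≥0∞} (hε : 0 < ε) :
    ∃ p₁, p₁ ≤ p ∧ p₁ ≤ 1 ∧ (0 < p → p₁ < p) ∧ T p q - ε ≤ T p₁ q := by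
  obtain ⟨p₁, h1, h2, h3, h4⟩ := T_lower_sel₂ hT hq hp hε
  refine ⟨p₁, h1, h2, h3, ?_⟩
  rw [T_comm hT h2 hq, T_comm hT hp hq]
  exact h4

lemma Tcont_of (hT : IsLeftContTNorm T)
    (rc : ∀ p, p ≤ 1 → ∀ q, q < 1 → (⨅ q₂ ∈ Ioc q 1, T p q₂) ≤ T p q) :
    TNormContinuous T := by
  intro pq hpq
  obtain ⟨hp01, hq01⟩ := hpq
  have hp : pq.1 ≤ 1 := hp01.2
  have hq : pq.2 ≤ 1 := hq01.2
  have hTne : T pq.1 pq.2 ≠ ⊤ := (lt_of_le_of_lt (T_le_one hT hp hq) one_lt_top).ne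
  rw [ContinuousWithinAt, ENNReal.tendsto_nhds hTne]
  intro ε hε
  have hε2 : 0 < ε / 2 := ENNReal.half_pos hε.ne'
  obtain ⟨p₂, hp₂ge, hp₂1, hp₂gt, hp₂T⟩ := T_upper_sel₁ hT rc hp hq hε2
  obtain ⟨q₂, hq₂ge, hq₂1, hq₂gt, hq₂T⟩ := T_upper_sel₂ hT rc hp₂1 hq hε2
  have hub : T p₂ q₂ ≤ T pq.1 pq.2 + ε := by
    calc T p₂ q₂ ≤ T p₂ pq.2 + ε / 2 := hq₂T
      _ ≤ (T pq.1 pq.2 + ε / 2) + ε / 2 := add_le_add_left hp₂T _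
      _ = T pq.1 pq.2 + ε := by rw [add_assoc, ENNReal.add_halves]
  obtain ⟨p₁, hp₁le, hp₁1, hp₁lt, hp₁T⟩ := T_lower_sel₁ hT hp hq hε2
  obtain ⟨q₁, hq₁le, hq₁1, hq₁lt, hq₁T⟩ := T_lower_sel₂ hT hp₁1 hq hε2
  have hlb : T pq.1 pq.2 - ε ≤ T p₁ q₁ := by
    calc T pq.1 pq.2 - ε = T pq.1 pq.2 - ε / 2 - ε / 2 := by
          rw [tsub_tsub, ENNReal.add_halves]
      _ ≤ T p₁ pq.2 - ε / 2 := tsub_le_tsub_right hp₁T _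
      _ ≤ T p₁ q₁ := hq₁T
  have hU2 : ∃ U ∈ 𝓝 pq.1, ∀ a ∈ U, a ≤ 1 → a ≤ p₂ := by
    by_cases hp1 : pq.1 < 1
    · exact ⟨Iio p₂, Iio_mem_nhds (hp₂gt hp1), fun a ha _ => (mem_Iio.1 ha).le⟩
    · have h1 : (1:ℝ≥0∞) ≤ p₂ := le_trans (not_lt.1 hp1) hp₂ge
      exact ⟨univ, univ_mem, fun a _ ha1 => ha1.trans h1⟩
  have hU1 : ∃ U ∈ 𝓝 pq.1, ∀ a ∈ U, p₁ ≤ a := by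
    by_cases hp0 : 0 < pq.1
    · exact ⟨Ioi p₁, Ioi_mem_nhds (hp₁lt hp0), fun a ha => (mem_Ioi.1 ha).le⟩
    · push_neg at hp0
      have h1 : p₁ = 0 := le_antisymm (hp₁le.trans hp0) (zero_le)
      exact ⟨univ, univ_mem, fun a _ => h1 ▸ (zero_le : (0:ℝ≥0∞) ≤ a)⟩
  have hV2 : ∃ V ∈ 𝓝 pq.2, ∀ b ∈ V, b ≤ 1 → b ≤ q₂ := by
    by_cases hq1 : pq.2 < 1
    · exact ⟨Iio q₂, Iio_mem_nhds (hq₂gt hq1), fun b hb _ => (mem_Iio.1 hb).le⟩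
    · have h1 : (1:ℝ≥0∞) ≤ q₂ := le_trans (not_lt.1 hq1) hq₂ge
      exact ⟨univ, univ_mem, fun b _ hb1 => hb1.trans h1⟩
  have hV1 : ∃ V ∈ 𝓝 pq.2, ∀ b ∈ V, q₁ ≤ b := by
    by_cases hq0 : 0 < pq.2
    · exact ⟨Ioi q₁, Ioi_mem_nhds (hq₁lt hq0), fun b hb => (mem_Ioi.1 hb).le⟩
    · push_neg at hq0
      have h1 : q₁ = 0 := le_antisymm (hq₁le.trans hq0) (zero_le)
      exact ⟨univ, univ_mem, fun b _ => h1 ▸ (zero_le : (0:ℝ≥0∞) ≤ b)⟩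
  obtain ⟨U2, hU2n, hU2p⟩ := hU2
  obtain ⟨U1, hU1n, hU1p⟩ := hU1
  obtain ⟨V2, hV2n, hV2p⟩ := hV2
  obtain ⟨V1, hV1n, hV1p⟩ := hV1
  have hprod : (U2 ∩ U1) ×ˢ (V2 ∩ V1) ∈ 𝓝 pq :=
    prod_mem_nhds (inter_mem hU2n hU1n) (inter_mem hV2n hV1n)
  filter_upwards [mem_nhdsWithin_of_mem_nhds hprod, self_mem_nhdsWithin] with ab hab hmem
  have ha1 : ab.1 ≤ 1 := hmem.1.2
  have hb1 : ab.2 ≤ 1 := hmem.2.2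
  constructor
  · refine le_trans hlb ?_
    calc T p₁ q₁ ≤ T ab.1 q₁ := T_mono1 hT hq₁1 hp₁1 ha1 (hU1p ab.1 hab.1.2)
      _ ≤ T ab.1 ab.2 := T_mono2 hT ha1 hq₁1 hb1 (hV1p ab.2 hab.2.2)
  · refine le_trans ?_ hub
    calc T ab.1 ab.2 ≤ T p₂ ab.2 := T_mono1 hT hb1 ha1 hp₂1 (hU2p ab.1 hab.1.1 ha1)
      _ ≤ T p₂ q₂ := T_mono2 hT hp₂1 hb1 hq₂1 (hV2p ab.2 hab.2.1 hb1)

end Tcont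

theorem tensor_nondef_cont_iff_cancellation (T L : ℝ≥0∞ → ℝ≥0∞ → ℝ≥0∞)
    (hT : IsLeftContTNorm T) (hL : IsRightContLOp L) :
    (∀ f g : ℝ≥0∞ → ℝ≥0∞, IsDDF f → NonDefective f → IsDDF g → Continuous g →
      IsDDF (tensor L T f g) ∧ Continuous (tensor L T f g)) ↔
    (TNormContinuous T ∧
      ∀ x y z : ℝ≥0∞, L x y = L x z → x = ⊤ ∨ y = z) := by
  constructor
  · intro hLHS
    have canc := forward_canc hT hL hLHS
    exact ⟨Tcont_of hT fun p hp q hq => forward_rcT hT hL hLHS canc hp hq, canc⟩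
  · rintro ⟨hTc, canc⟩ f g hf hfn hg hgc
    exact ⟨tensor_isDDF hT hf.2.1 hg.2.1,
      tensor_continuous hT hL hTc canc hf hfn hg hgc⟩
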